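/- The set Σ_{c,c'}^N of N-layered convolutional neural networks is a vector space: it contains 0, and is closed under scalar multiplication and pointwise addition of functions. -/

import Mathlib

/-- Zero-extension of a finite vector to an integer-indexed sequence. -/
def zpad (d : ℕ) (x : Fin d → ℝ) (m : ℤ) : ℝ :=
  if h : 0 ≤ m ∧ m < (d : ℤ) then x ⟨m.toNat, by omega⟩ else 0

/-- Zero padding convolution with kernel `w` supported on `[-k, k]`. -/
noncomputable def zconv (d k : ℕ) (w : ℤ → ℝ) (x : Fin d → ℝ) (i : Fin d) : ℝ :=
  ∑ j ∈ Finset.Icc (-(k : ℤ)) (k : ℤ), w j * zpad d x ((i : ℤ) + j)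

/-- A zero-padding convolutional layer with `c₁` input and `c₂` output channels:
`C(x)^i = ∑_j w_{i,j} ⊛ x^j + δ_i · 1_d` for some kernel size `2k+1`. -/
def IsConvLayer (d c₁ c₂ : ℕ)
    (C : (Fin c₁ → Fin d → ℝ) → (Fin c₂ → Fin d → ℝ)) : Prop :=
  ∃ (k : ℕ) (w : Fin c₂ → Fin c₁ → ℤ → ℝ) (δ : Fin c₂ → ℝ),
    ∀ x i p, C x i p = (∑ j, zconv d k (w i j) (x j) p) + δ i

/-- `InSigma σ d N c c' f`: `f ∈ Σ_{c,c'}^N`, i.e. `f = C_N ∘ σ ∘ C_{N-1} ∘ ⋯ ∘ σ ∘ C_1`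
for some zero-padding convolutional layers with arbitrary intermediate channel sizes. -/
def InSigma (σ : ℝ → ℝ) (d : ℕ) :
    (N : ℕ) → (c c' : ℕ) → ((Fin c → Fin d → ℝ) → (Fin c' → Fin d → ℝ)) → Prop
  | 0, _, _, _ => False
  | 1, c, c', f => IsConvLayer d c c' f
  | (N + 2), c, c', f =>
      ∃ c₁ C, IsConvLayer d c c₁ C ∧
        ∃ g, InSigma σ d (N + 1) c₁ c' g ∧ ∀ x, f x = g (fun i p => σ (C x i p))

/-! ### Auxiliary lemmas -/

/-- Truncation of a kernel to `[-k, k]`. -/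
noncomputable def ktrunc (k : ℕ) (w : ℤ → ℝ) : ℤ → ℝ :=
  fun j => if j ∈ Finset.Icc (-(k : ℤ)) (k : ℤ) then w j else 0

lemma zconv_zero (d k : ℕ) (x : Fin d → ℝ) (p : Fin d) :
    zconv d k (fun _ => 0) x p = 0 := by
  simp [zconv]

lemma zconv_smul (d k : ℕ) (a : ℝ) (w : ℤ → ℝ) (x : Fin d → ℝ) (p : Fin d) :
    zconv d k (fun m => a * w m) x p = a * zconv d k w x p := by
  simp only [zconv, Finset.mul_sum]
  exact Finset.sum_congr rfl fun j _ => by ring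

lemma zconv_add (d k : ℕ) (w v : ℤ → ℝ) (x : Fin d → ℝ) (p : Fin d) :
    zconv d k (fun m => w m + v m) x p = zconv d k w x p + zconv d k v x p := by
  simp only [zconv, ← Finset.sum_add_distrib]
  exact Finset.sum_congr rfl fun j _ => by ring

lemma zconv_trunc (d : ℕ) {k k' : ℕ} (h : k ≤ k') (w : ℤ → ℝ) (x : Fin d → ℝ) (p : Fin d) :
    zconv d k' (ktrunc k w) x p = zconv d k w x p := by
  unfold zconv
  have hsub : Finset.Icc (-(k : ℤ)) (k : ℤ) ⊆ Finset.Icc (-(k' : ℤ)) (k' : ℤ) :=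
    Finset.Icc_subset_Icc (by omega) (by omega)
  rw [← Finset.sum_subset hsub]
  · refine Finset.sum_congr rfl fun j hj => ?_
    simp [ktrunc, hj]
  · intro j _ hj
    simp [ktrunc, hj]

lemma isConvLayer_zero (d c₁ c₂ : ℕ) :
    IsConvLayer d c₁ c₂ (fun _ => 0) := by
  refine ⟨0, fun _ _ _ => 0, fun _ => 0, fun x i p => ?_⟩
  simp [zconv_zero]

lemma isConvLayer_smul (d c₁ c₂ : ℕ) (a : ℝ)
    {C : (Fin c₁ → Fin d → ℝ) → (Fin c₂ → Fin d → ℝ)} (hC : IsConvLayer d c₁ c₂ C) :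
    IsConvLayer d c₁ c₂ (fun x => a • C x) := by
  obtain ⟨k, w, δ, hw⟩ := hC
  refine ⟨k, fun i j m => a * w i j m, fun i => a * δ i, fun x i p => ?_⟩
  simp only [Pi.smul_apply, smul_eq_mul, hw, mul_add, Finset.mul_sum]
  congr 1
  exact Finset.sum_congr rfl fun j _ => (zconv_smul d k a (w i j) (x j) p).symm

lemma isConvLayer_add (d c₁ c₂ : ℕ)
    {C D : (Fin c₁ → Fin d → ℝ) → (Fin c₂ → Fin d → ℝ)}
    (hC : IsConvLayer d c₁ c₂ C) (hD : IsConvLayer d c₁ c₂ D) :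
    IsConvLayer d c₁ c₂ (fun x => C x + D x) := by
  obtain ⟨k₁, w₁, δ₁, hw₁⟩ := hC
  obtain ⟨k₂, w₂, δ₂, hw₂⟩ := hD
  refine ⟨max k₁ k₂, fun i j m => ktrunc k₁ (w₁ i j) m + ktrunc k₂ (w₂ i j) m,
    fun i => δ₁ i + δ₂ i, fun x i p => ?_⟩
  simp only [Pi.add_apply, hw₁, hw₂]
  have : ∀ j : Fin c₁,
      zconv d (max k₁ k₂) (fun m => ktrunc k₁ (w₁ i j) m + ktrunc k₂ (w₂ i j) m) (x j) p
        = zconv d k₁ (w₁ i j) (x j) p + zconv d k₂ (w₂ i j) (x j) p := by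
    intro j
    rw [zconv_add, zconv_trunc d (le_max_left k₁ k₂), zconv_trunc d (le_max_right k₁ k₂)]
  rw [Finset.sum_congr rfl fun j _ => this j, Finset.sum_add_distrib]
  ring

/-- Stacking two layers with the same input into the direct sum of outputs. -/
lemma isConvLayer_stack (d c c₂ c₃ : ℕ)
    {C : (Fin c → Fin d → ℝ) → (Fin c₂ → Fin d → ℝ)}
    {D : (Fin c → Fin d → ℝ) → (Fin c₃ → Fin d → ℝ)}
    (hC : IsConvLayer d c c₂ C) (hD : IsConvLayer d c c₃ D) :
    IsConvLayer d c (c₂ + c₃) (fun x => Fin.addCases (C x) (D x)) := by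
  obtain ⟨k₁, w₁, δ₁, hw₁⟩ := hC
  obtain ⟨k₂, w₂, δ₂, hw₂⟩ := hD
  refine ⟨max k₁ k₂,
    Fin.addCases (fun i j => ktrunc k₁ (w₁ i j)) (fun i j => ktrunc k₂ (w₂ i j)),
    Fin.addCases δ₁ δ₂, fun x i p => ?_⟩
  induction i using Fin.addCases with
  | left i =>
      simp only [Fin.addCases_left, hw₁]
      congr 1
      exact Finset.sum_congr rfl fun j _ =>
        (zconv_trunc d (le_max_left k₁ k₂) (w₁ i j) (x j) p).symm
  | right i =>
      simp only [Fin.addCases_right, hw₂]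
      congr 1
      exact Finset.sum_congr rfl fun j _ =>
        (zconv_trunc d (le_max_right k₁ k₂) (w₂ i j) (x j) p).symm

/-- Block-diagonal (direct-sum) combination of two layers. -/
lemma isConvLayer_blockDiag (d c₁ c₁' c₂ c₂' : ℕ)
    {C : (Fin c₁ → Fin d → ℝ) → (Fin c₂ → Fin d → ℝ)}
    {D : (Fin c₁' → Fin d → ℝ) → (Fin c₂' → Fin d → ℝ)}
    (hC : IsConvLayer d c₁ c₂ C) (hD : IsConvLayer d c₁' c₂' D) :
    IsConvLayer d (c₁ + c₁') (c₂ + c₂')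
      (fun x => Fin.addCases (C (fun i => x (Fin.castAdd c₁' i)))
        (D (fun i => x (Fin.natAdd c₁ i)))) := by
  obtain ⟨k₁, w₁, δ₁, hw₁⟩ := hC
  obtain ⟨k₂, w₂, δ₂, hw₂⟩ := hD
  refine ⟨max k₁ k₂,
    Fin.addCases
      (fun i => Fin.addCases (fun j => ktrunc k₁ (w₁ i j)) (fun _ _ => 0))
      (fun i => Fin.addCases (fun _ _ => 0) (fun j => ktrunc k₂ (w₂ i j))),
    Fin.addCases δ₁ δ₂, fun x i p => ?_⟩
  induction i using Fin.addCases with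
  | left i =>
      simp only [Fin.addCases_left, hw₁, Fin.sum_univ_add, Fin.addCases_right]
      rw [Finset.sum_congr rfl (fun j _ => zconv_zero d (max k₁ k₂) _ p), Finset.sum_const_zero,
        add_zero]
      congr 1
      exact Finset.sum_congr rfl fun j _ =>
        (zconv_trunc d (le_max_left k₁ k₂) (w₁ i j) _ p).symm
  | right i =>
      simp only [Fin.addCases_right, hw₂, Fin.sum_univ_add, Fin.addCases_left]
      rw [Finset.sum_congr rfl (fun j _ => zconv_zero d (max k₁ k₂) _ p), Finset.sum_const_zero,
        zero_add]
      congr 1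
      exact Finset.sum_congr rfl fun j _ =>
        (zconv_trunc d (le_max_right k₁ k₂) (w₂ i j) _ p).symm

lemma inSigma_zero (σ : ℝ → ℝ) (d : ℕ) :
    ∀ N, 1 ≤ N → ∀ c c', InSigma σ d N c c' (fun _ => 0) := by
  intro N
  induction N with
  | zero => omega
  | succ n ih =>
      intro _ c c'
      cases n with
      | zero => exact isConvLayer_zero d c c'
      | succ m =>
          exact ⟨c, fun _ => 0, isConvLayer_zero d c c,
            fun _ => 0, ih (by omega) c c', fun x => rfl⟩

lemma inSigma_smul (σ : ℝ → ℝ) (d : ℕ) (a : ℝ) :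
    ∀ N c c' f, InSigma σ d N c c' f → InSigma σ d N c c' (fun x => a • f x) := by
  intro N
  induction N with
  | zero => intro _ _ _ h; exact h.elim
  | succ n ih =>
      intro c c' f hf
      cases n with
      | zero => exact isConvLayer_smul d c c' a hf
      | succ m =>
          obtain ⟨c₁, C, hC, g, hg, hfg⟩ := hf
          exact ⟨c₁, C, hC, fun y => a • g y, ih c₁ c' g hg,
            fun x => by simp [hfg x]⟩

/-- Sum with split inputs. -/
lemma inSigma_add_split (σ : ℝ → ℝ) (d : ℕ) :
    ∀ N c₁ c₂ c' f g, InSigma σ d N c₁ c' f → InSigma σ d N c₂ c' g →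
      InSigma σ d N (c₁ + c₂) c'
        (fun x => f (fun i => x (Fin.castAdd c₂ i)) + g (fun i => x (Fin.natAdd c₁ i))) := by
  intro N
  induction N with
  | zero => intro _ _ _ _ _ h; exact h.elim
  | succ n ih =>
      intro c₁ c₂ c' f g hf hg
      cases n with
      | zero =>
          obtain ⟨k₁, w₁, δ₁, hw₁⟩ := hf
          obtain ⟨k₂, w₂, δ₂, hw₂⟩ := hg
          refine ⟨max k₁ k₂,
            fun i => Fin.addCases (fun j => ktrunc k₁ (w₁ i j)) (fun j => ktrunc k₂ (w₂ i j)),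
            fun i => δ₁ i + δ₂ i, fun x i p => ?_⟩
          simp only [Pi.add_apply, hw₁, hw₂, Fin.sum_univ_add, Fin.addCases_left,
            Fin.addCases_right]
          rw [Finset.sum_congr rfl
              (fun j _ => zconv_trunc d (le_max_left k₁ k₂) (w₁ i j) _ p),
            Finset.sum_congr rfl
              (fun j _ => zconv_trunc d (le_max_right k₁ k₂) (w₂ i j) _ p)]
          ring
      | succ m =>
          obtain ⟨cf, Cf, hCf, gf, hgf, hf_eq⟩ := hf
          obtain ⟨cg, Cg, hCg, gg, hgg, hg_eq⟩ := hg
          refine ⟨cf + cg, _, isConvLayer_blockDiag d c₁ c₂ cf cg hCf hCg,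
            fun y => gf (fun i => y (Fin.castAdd cg i)) + gg (fun i => y (Fin.natAdd cf i)),
            ih cf cg c' gf gg hgf hgg, fun x => ?_⟩
          simp only [hf_eq, hg_eq]
          congr 1
          · exact congrArg _ (by funext i p; simp)
          · exact congrArg _ (by funext i p; simp)

lemma inSigma_add (σ : ℝ → ℝ) (d : ℕ) :
    ∀ N c c' f g, InSigma σ d N c c' f → InSigma σ d N c c' g →
      InSigma σ d N c c' (fun x => f x + g x) := by
  intro N c c' f g hf hg
  cases N with
  | zero => exact hf.elim
  | succ n =>
      cases n with
      | zero => exact isConvLayer_add d c c' hf hg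
      | succ m =>
          obtain ⟨cf, Cf, hCf, gf, hgf, hf_eq⟩ := hf
          obtain ⟨cg, Cg, hCg, gg, hgg, hg_eq⟩ := hg
          refine ⟨cf + cg, _, isConvLayer_stack d c cf cg hCf hCg,
            fun y => gf (fun i => y (Fin.castAdd cg i)) + gg (fun i => y (Fin.natAdd cf i)),
            inSigma_add_split σ d (m + 1) cf cg c' gf gg hgf hgg, fun x => ?_⟩
          simp only [hf_eq, hg_eq]
          congr 1
          · exact congrArg _ (by funext i p; simp)
          · exact congrArg _ (by funext i p; simp)

/-- `Σ_{c,c'}^N` is a vector space: it contains the zero function and is closed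
under scalar multiplication and pointwise addition. -/
theorem InSigma_vectorSpace (σ : ℝ → ℝ) (d N c c' : ℕ) (hN : 1 ≤ N) :
    InSigma σ d N c c' (fun _ => 0) ∧
    (∀ (a : ℝ) (f : (Fin c → Fin d → ℝ) → (Fin c' → Fin d → ℝ)),
      InSigma σ d N c c' f → InSigma σ d N c c' (fun x => a • f x)) ∧
    (∀ f g : (Fin c → Fin d → ℝ) → (Fin c' → Fin d → ℝ),
      InSigma σ d N c c' f → InSigma σ d N c c' g →
        InSigma σ d N c c' (fun x => f x + g x)) :=
  ⟨inSigma_zero σ d N hN c c',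
   fun a f hf => inSigma_smul σ d a N c c' f hf,
   fun f g hf hg => inSigma_add σ d N c c' f g hf hg⟩
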